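/- Let H be a group, φ ∈ Aut(H), y ∈ H, and let τ ∈ Sym(H × H-indexed set) act on H × H by swapping coordinates. If the element g = (y, 1)τ normalises the diagonal subgroup Diag_φ(H×H) = {(h, h^φ) : h ∈ H} inside H wr Sym(2), then φ² equals the inner automorphism of H induced by y. -/

import Mathlib

/-- The permutation action of `Equiv.Perm Bool` on `Bool → H` as multiplicative
automorphisms (permuting the two coordinates of the base group of `H wr Sym(2)`). -/
def permHom (H : Type*) [Group H] : Equiv.Perm Bool →* MulAut (Bool → H) where
  toFun e :=
    { toEquiv := Equiv.arrowCongr e (Equiv.refl H)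
      map_mul' := fun _ _ => rfl }
  map_one' := by ext f b; rfl
  map_mul' := by intro e f; ext u b; rfl

/-- The wreath product `H wr Sym(2)`, realised as `(Bool → H) ⋊ Sym(Bool)`. -/
abbrev Wr (H : Type*) [Group H] := SemidirectProduct (Bool → H) (Equiv.Perm Bool) (permHom H)

/-- The element `(h, h^φ)` of the base group `H × H` of `H wr Sym(2)`
(coordinate `false` is the first entry, coordinate `true` the second). -/
def diagW {H : Type*} [Group H] (φ : MulAut H) (h : H) : Wr H :=
  ⟨fun b => bif b then φ h else h, 1⟩

/-- The element `g = (y, 1)·τ` of `H wr Sym(2)`, where `τ` is the coordinate swap. -/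
def gW {H : Type*} [Group H] (y : H) : Wr H :=
  ⟨fun b => bif b then 1 else y, Equiv.swap false true⟩

/-- If `g = (y,1)τ` normalises the diagonal subgroup `Diag_φ(H×H) = {(h, h^φ)}`,
then `φ² = ι_y`, the inner automorphism `h ↦ y⁻¹ h y`. -/
theorem stmt_7 {H : Type*} [Group H] (φ : MulAut H) (y : H)
    (hnorm : (fun x => (gW y)⁻¹ * x * gW y) '' Set.range (diagW φ) = Set.range (diagW φ)) :
    ∀ h : H, φ (φ h) = y⁻¹ * h * y := by
  intro h
  have hmem : (gW y)⁻¹ * diagW φ h * gW y ∈ Set.range (diagW φ) := by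
    rw [← hnorm]; exact ⟨diagW φ h, ⟨h, rfl⟩, rfl⟩
  obtain ⟨h', hh'⟩ := hmem
  have hl := congrArg SemidirectProduct.left hh'
  have hf := congrFun hl false
  have ht := congrFun hl true
  have hf' : h' = (1 : H)⁻¹ * φ h * 1 := hf
  have ht' : φ h' = y⁻¹ * h * y := ht
  simp only [inv_one, one_mul, mul_one] at hf'
  rw [← hf', ht']
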